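/- arXiv:1612.01112 — 2 statements merged into one kernel-verified Lean document; each statement's English description precedes it below -/
import Mathlib

section
/- For every integer n ≥ 1 and every integer k with |k| < n, the series ∑_{j=1}^{∞} (k/n)^{2j} · (1/j) · (n/(2j−1) − 1/2) converges and its sum equals b_{k,n}. -/
open Real

/-- `b k n` for `|k| < n`. -/
noncomputable def b (n : ℕ) (k : ℤ) : ℝ :=
  (n : ℝ) * ((1 + ((k : ℝ) + 1 / 2) / n) * Real.log (1 + (k : ℝ) / n)
    + (1 - ((k : ℝ) - 1 / 2) / n) * Real.log (1 - (k : ℝ) / n))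

/-- The series `∑_{j=1}^∞ (k/n)^{2j} · (1/j) · (n/(2j−1) − 1/2)` (indexed here by
`j : ℕ` via `j ↦ j+1`) converges, with sum `b k n`. -/
theorem stmt_13 (n : ℕ) (hn : 1 ≤ n) (k : ℤ) (hk : |k| < (n : ℤ)) :
    HasSum (fun j : ℕ => ((k : ℝ) / n) ^ (2 * (j + 1)) * (1 / ((j : ℝ) + 1)) *
      ((n : ℝ) / (2 * ((j : ℝ) + 1) - 1) - 1 / 2)) (b n k) := by
  have hn0 : (0 : ℝ) < n := by exact_mod_cast hn
  set x : ℝ := (k : ℝ) / n with hxdef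
  have hx : |x| < 1 := by
    rw [abs_div, abs_of_pos hn0, div_lt_one hn0]
    exact_mod_cast hk
  have hx2 : |x ^ 2| < 1 := by
    rw [abs_pow]
    calc |x| ^ 2 ≤ |x| * 1 := by nlinarith [abs_nonneg x]
    _ < 1 := by simpa using hx
  have hx1p : (0 : ℝ) < 1 + x := by
    have := (abs_lt.mp hx).1; linarith
  have hx1m : (0 : ℝ) < 1 - x := by
    have := (abs_lt.mp hx).2; linarith
  have hk' : (k : ℝ) = x * n := by
    rw [hxdef]; field_simp
  clear_value x
  have A := hasSum_pow_div_log_of_abs_lt_one hx2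
  have B := hasSum_log_sub_log_of_abs_lt_one hx
  have C := (B.mul_left ((n : ℝ) * x)).sub (A.mul_left ((n : ℝ) + 1 / 2))
  have hlog : Real.log (1 - x ^ 2) = Real.log (1 + x) + Real.log (1 - x) := by
    rw [show (1 : ℝ) - x ^ 2 = (1 + x) * (1 - x) by ring,
      Real.log_mul hx1p.ne' hx1m.ne']
  have hsum_eq : (n : ℝ) * x * (Real.log (1 + x) - Real.log (1 - x)) -
      ((n : ℝ) + 1 / 2) * -Real.log (1 - x ^ 2) = b n k := by
    rw [hlog]
    unfold b
    rw [← hxdef, hk']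
    field_simp
    ring
  rw [hsum_eq] at C
  convert C using 2 with j
  on_goal 1 => rfl
  have hj1 : ((j : ℝ) + 1) ≠ 0 := by positivity
  have hj2 : (2 * ((j : ℝ) + 1) - 1) ≠ 0 := by
    have : (2 * ((j : ℝ) + 1) - 1) = 2 * j + 1 := by ring
    rw [this]; positivity
  have hpow : x ^ (2 * (j + 1)) = x * x ^ (2 * j + 1) := by ring
  rw [hpow, ← pow_mul]
  rw [show 2 * (j + 1) = 2 * j + 1 + 1 from by ring, pow_succ]
  rw [show (2 * ((j : ℝ) + 1) - 1) = 2 * j + 1 by ring]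
  field_simp
  ring
end

section
/- For every integer n ≥ 3 and every integer k with |k| ≤ n^{2/3}, one has |b_{k,n} − k²/n| ≤ n^{−1/3}. -/
open Real

set_option maxHeartbeats 1000000

lemma polyQ (x : ℝ) :
    -((1+x) * (∑ i ∈ Finset.range 17, (-x)^(i+1)/(i+1))) - (1-x) * (∑ i ∈ Finset.range 17, x^(i+1)/(i+1)) - x^2
    = x^4/6 + x^6/15 + x^8/28 + x^10/45 + x^12/66 + x^14/91 + x^16/120 + 2/17*x^18 := by
  simp [Finset.sum_range_succ]
  ring

lemma aux_num (N t u : ℝ) (ht0 : 0 < t) (htc : t ≤ 0.694) (hNt : N * t^3 = 1)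
    (hu0 : 0 ≤ u) (hut : u ≤ t) :
    N * (2*(1+u)*(u^18/(1-u))) +
      N * (u^4/6 + u^6/15 + u^8/28 + u^10/45 + u^12/66 + u^14/91 + u^16/120 + 2/17*u^18) +
      u^2/(2*(1-u^2)) ≤ t := by
  have huc : u ≤ 0.694 := hut.trans htc
  have htp : (0:ℝ) < t^3 := by positivity
  have hN0 : 0 < N := by nlinarith
  have hm : ∀ m : ℕ, N * u ^ (m+4) ≤ t * 0.694 ^ m := by
    intro m
    have h1 : u ^ (m+4) ≤ t^(m+4) := pow_le_pow_left₀ hu0 hut _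
    have h2 : N * t^(m+4) = t * t^m := by
      have h3 : t^(m+4) = t^3 * (t * t^m) := by ring
      rw [h3, ← mul_assoc, hNt, one_mul]
    have h3 : t^m ≤ 0.694^m := pow_le_pow_left₀ ht0.le htc m
    calc N * u^(m+4) ≤ N * t^(m+4) := by gcongr
      _ = t * t^m := h2
      _ ≤ t * 0.694^m := by gcongr
  have h0 := hm 0; have h2 := hm 2; have h4 := hm 4; have h6 := hm 6
  have h8 := hm 8; have h10 := hm 10; have h12 := hm 12; have h14 := hm 14
  norm_num at h0 h2 h4 h6 h8 h10 h12 h14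
  have hX0 : (0:ℝ) ≤ u^18/(1-u) := div_nonneg (by positivity) (by linarith)
  have hX : u^18/(1-u) ≤ u^18/0.306 := by gcongr; linarith
  have ht1 : N * (2*(1+u)*(u^18/(1-u))) ≤ 2*(1+0.694)/0.306 * (t * 0.694^14) := by
    have hb1 : (1+u)*(u^18/(1-u)) ≤ (1+0.694)*(u^18/0.306) :=
      mul_le_mul (by linarith) hX hX0 (by norm_num)
    have hb2 : N * (2*(1+u)*(u^18/(1-u))) ≤ N * (2*((1+0.694)*(u^18/0.306))) := by
      have := mul_le_mul_of_nonneg_left (by linarith : 2*((1+u)*(u^18/(1-u))) ≤ 2*((1+0.694)*(u^18/0.306))) hN0.le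
      linarith [this]
    have h14' : N * u^18 ≤ t * (0.694:ℝ)^14 := by simpa using hm 14
    have heq : N * (2*((1+0.694)*(u^18/0.306))) = 2*(1+0.694)/0.306 * (N * u^18) := by ring
    have hb3 : 2*(1+0.694)/0.306 * (N * u^18) ≤ 2*(1+0.694)/0.306 * (t * 0.694^14) :=
      mul_le_mul_of_nonneg_left h14' (by norm_num)
    linarith [hb2, hb3, heq.le, heq.ge]
  have ht3 : u^2/(2*(1-u^2)) ≤ t * 0.694 / (2*(1 - 0.694^2)) := by
    have hu2 : u^2 ≤ t * 0.694 := by nlinarith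
    calc u^2/(2*(1-u^2)) ≤ u^2/(2*(1-0.694^2)) := by gcongr
      _ ≤ t * 0.694 / (2*(1-0.694^2)) := by gcongr
  have hpoly : N * (u^4/6 + u^6/15 + u^8/28 + u^10/45 + u^12/66 + u^14/91 + u^16/120 + 2/17*u^18)
      = (N*u^4)/6 + (N*u^6)/15 + (N*u^8)/28 + (N*u^10)/45 + (N*u^12)/66 + (N*u^14)/91 + (N*u^16)/120 + 2/17*(N*u^18) := by
    ring
  rw [hpoly]
  norm_num at ht1 ht3 ⊢
  linarith


lemma core_bound (N t x : ℝ) (hN0 : 0 < N) (ht0 : 0 < t) (htc : t ≤ 0.694)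
    (hNt : N * t^3 = 1) (hut : |x| ≤ t) :
    |N*((1+x)*Real.log (1+x) + (1-x)*Real.log (1-x) - x^2)
      + (1/2)*(Real.log (1+x) + Real.log (1-x))| ≤ t := by
  set u : ℝ := |x| with hudef
  have hu0 : 0 ≤ u := abs_nonneg x
  have hx1 : |x| < 1 := lt_of_le_of_lt (hut.trans htc) (by norm_num)
  have h1px : 0 < 1 + x := by have := abs_lt.mp hx1; linarith [this.1]
  have h1mx : 0 < 1 - x := by have := abs_lt.mp hx1; linarith [(abs_lt.mp hx1).2]
  set Lp : ℝ := Real.log (1 + x) with hLp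
  set Lm : ℝ := Real.log (1 - x) with hLm
  have hep : |(∑ i ∈ Finset.range 17, (-x)^(i+1)/(i+1)) + Lp| ≤ u^18/(1-u) := by
    have h := Real.abs_log_sub_add_sum_range_le (x := -x) (by rwa [abs_neg]) 17
    simp only [abs_neg, sub_neg_eq_add] at h
    rw [hLp]; convert h using 2 <;> norm_num
  have hem : |(∑ i ∈ Finset.range 17, x^(i+1)/(i+1)) + Lm| ≤ u^18/(1-u) := by
    have h := Real.abs_log_sub_add_sum_range_le hx1 17
    rw [hLm]; convert h using 2 <;> norm_num
  have hx2 : x^2 = u^2 := (sq_abs x).symm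
  have hQ : (1+x)*Lp + (1-x)*Lm - x^2
      = (1+x)*((∑ i ∈ Finset.range 17, (-x)^(i+1)/(i+1)) + Lp)
        + (1-x)*((∑ i ∈ Finset.range 17, x^(i+1)/(i+1)) + Lm)
        + (u^4/6 + u^6/15 + u^8/28 + u^10/45 + u^12/66 + u^14/91 + u^16/120 + 2/17*u^18) := by
    have h := polyQ x
    have hconv : x^4/6 + x^6/15 + x^8/28 + x^10/45 + x^12/66 + x^14/91 + x^16/120 + 2/17*x^18
        = u^4/6 + u^6/15 + u^8/28 + u^10/45 + u^12/66 + u^14/91 + u^16/120 + 2/17*u^18 := by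
      calc x^4/6 + x^6/15 + x^8/28 + x^10/45 + x^12/66 + x^14/91 + x^16/120 + 2/17*x^18
          = (x^2)^2/6 + (x^2)^3/15 + (x^2)^4/28 + (x^2)^5/45 + (x^2)^6/66 + (x^2)^7/91 + (x^2)^8/120 + 2/17*(x^2)^9 := by ring
        _ = (u^2)^2/6 + (u^2)^3/15 + (u^2)^4/28 + (u^2)^5/45 + (u^2)^6/66 + (u^2)^7/91 + (u^2)^8/120 + 2/17*(u^2)^9 := by rw [hx2]
        _ = u^4/6 + u^6/15 + u^8/28 + u^10/45 + u^12/66 + u^14/91 + u^16/120 + 2/17*u^18 := by ring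
    linear_combination h + hconv
  have hu2lt : u^2 < 1 := by nlinarith [htc, hut, hu0]
  have hDeq : (1+x)*(1-x) = 1 - u^2 := by rw [← hx2]; ring
  have hD : (0:ℝ) < (1+x)*(1-x) := mul_pos h1px h1mx
  have hD' : (0:ℝ) < 1 - u^2 := hDeq ▸ hD
  have hlogsum : |Lp + Lm| ≤ u^2/(1-u^2) := by
    have hLsum : Lp + Lm = Real.log (1 - u^2) := by
      rw [hLp, hLm, ← Real.log_mul h1px.ne' h1mx.ne', hDeq]
    have hup := Real.log_le_sub_one_of_pos hD'
    have h1 := Real.log_le_sub_one_of_pos (inv_pos.mpr hD')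
    rw [Real.log_inv] at h1
    have h2 : (1-u^2)⁻¹ - 1 = u^2/(1-u^2) := by field_simp; ring
    have h3 : (0:ℝ) ≤ u^2/(1-u^2) := div_nonneg (sq_nonneg u) hD'.le
    rw [hLsum, abs_le]
    constructor
    · linarith
    · linarith [sq_nonneg u]
  have h1pxu : |1+x| ≤ 1+u := (abs_add_le 1 x).trans (by norm_num [hudef])
  have h1mxu : |1-x| ≤ 1+u := (abs_sub _ _).trans (by norm_num [hudef])
  have hA1 : |(1+x)*((∑ i ∈ Finset.range 17, (-x)^(i+1)/(i+1)) + Lp)| ≤ (1+u)*(u^18/(1-u)) := by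
    rw [abs_mul]
    apply mul_le_mul h1pxu hep (abs_nonneg _) (by linarith)
  have hA2 : |(1-x)*((∑ i ∈ Finset.range 17, x^(i+1)/(i+1)) + Lm)| ≤ (1+u)*(u^18/(1-u)) := by
    rw [abs_mul]
    apply mul_le_mul h1mxu hem (abs_nonneg _) (by linarith)
  have hQnn : (0:ℝ) ≤ u^4/6 + u^6/15 + u^8/28 + u^10/45 + u^12/66 + u^14/91 + u^16/120 + 2/17*u^18 := by positivity
  have hAbs : |(1+x)*((∑ i ∈ Finset.range 17, (-x)^(i+1)/(i+1)) + Lp)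
        + (1-x)*((∑ i ∈ Finset.range 17, x^(i+1)/(i+1)) + Lm)
        + (u^4/6 + u^6/15 + u^8/28 + u^10/45 + u^12/66 + u^14/91 + u^16/120 + 2/17*u^18)|
      ≤ 2*(1+u)*(u^18/(1-u)) + (u^4/6 + u^6/15 + u^8/28 + u^10/45 + u^12/66 + u^14/91 + u^16/120 + 2/17*u^18) := by
    calc _ ≤ |(1+x)*((∑ i ∈ Finset.range 17, (-x)^(i+1)/(i+1)) + Lp)
        + (1-x)*((∑ i ∈ Finset.range 17, x^(i+1)/(i+1)) + Lm)|
        + |(u^4/6 + u^6/15 + u^8/28 + u^10/45 + u^12/66 + u^14/91 + u^16/120 + 2/17*u^18)| := abs_add_le _ _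
      _ ≤ _ := by
          rw [abs_of_nonneg hQnn]
          have := (abs_add_le ((1+x)*((∑ i ∈ Finset.range 17, (-x)^(i+1)/(i+1)) + Lp))
            ((1-x)*((∑ i ∈ Finset.range 17, x^(i+1)/(i+1)) + Lm)))
          linarith
  have hfinal : |N*((1+x)*Lp + (1-x)*Lm - x^2) + (1/2)*(Lp+Lm)| ≤
      N * (2*(1+u)*(u^18/(1-u))) +
      N * (u^4/6 + u^6/15 + u^8/28 + u^10/45 + u^12/66 + u^14/91 + u^16/120 + 2/17*u^18) +
      u^2/(2*(1-u^2)) := by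
    rw [hQ]
    calc |N * ((1+x)*((∑ i ∈ Finset.range 17, (-x)^(i+1)/(i+1)) + Lp)
        + (1-x)*((∑ i ∈ Finset.range 17, x^(i+1)/(i+1)) + Lm)
        + (u^4/6 + u^6/15 + u^8/28 + u^10/45 + u^12/66 + u^14/91 + u^16/120 + 2/17*u^18)) + (1/2)*(Lp+Lm)|
        ≤ |N * ((1+x)*((∑ i ∈ Finset.range 17, (-x)^(i+1)/(i+1)) + Lp)
        + (1-x)*((∑ i ∈ Finset.range 17, x^(i+1)/(i+1)) + Lm)
        + (u^4/6 + u^6/15 + u^8/28 + u^10/45 + u^12/66 + u^14/91 + u^16/120 + 2/17*u^18))| + |(1/2)*(Lp+Lm)| := abs_add_le _ _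
      _ ≤ _ := by
          rw [abs_mul, abs_mul, abs_of_pos hN0]
          have h1 := mul_le_mul_of_nonneg_left hAbs hN0.le
          have h2 : |(1:ℝ)/2| * |Lp+Lm| ≤ (1/2) * (u^2/(1-u^2)) := by
            rw [abs_of_pos (by norm_num : (0:ℝ) < (1:ℝ)/2)]
            linarith [hlogsum]
          have h3 : (1/2) * (u^2/(1-u^2)) = u^2/(2*(1-u^2)) := by
            field_simp
          have h4 : N * (2*(1+u)*(u^18/(1-u)) + (u^4/6 + u^6/15 + u^8/28 + u^10/45 + u^12/66 + u^14/91 + u^16/120 + 2/17*u^18))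
              = N * (2*(1+u)*(u^18/(1-u))) + N * (u^4/6 + u^6/15 + u^8/28 + u^10/45 + u^12/66 + u^14/91 + u^16/120 + 2/17*u^18) := by ring
          linarith [h1, h2, h3.le, h3.ge, h4.le, h4.ge]
  exact hfinal.trans (aux_num N t u ht0 htc hNt hu0 hut)

theorem stmt_14 (n : ℕ) (hn : 3 ≤ n) (k : ℤ) (hk : (|k| : ℝ) ≤ (n : ℝ) ^ ((2 : ℝ) / 3)) :
    |b n k - (k : ℝ) ^ 2 / n| ≤ (n : ℝ) ^ (-(1 : ℝ) / 3) := by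
  have hN3 : (3:ℝ) ≤ (n:ℝ) := by exact_mod_cast hn
  have hN0 : (0:ℝ) < (n:ℝ) := by linarith
  set N : ℝ := (n:ℝ) with hNdef
  set t : ℝ := N ^ (-(1:ℝ)/3) with htdef
  have ht0 : 0 < t := Real.rpow_pos_of_pos hN0 _
  have hNt : N * t^3 = 1 := by
    have h1 : t^3 = N^(-(1:ℝ)) := by
      rw [htdef, ← Real.rpow_natCast (N^(-(1:ℝ)/3)) 3, ← Real.rpow_mul hN0.le]
      norm_num
    rw [h1, Real.rpow_neg_one]
    exact mul_inv_cancel₀ hN0.ne'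
  have htc : t ≤ 0.694 := by
    have h13 : t^3 ≤ 1/3 := by
      have h : t^3 = 1/N := by field_simp; linarith [hNt]
      rw [h]
      rw [div_le_div_iff₀ hN0 (by norm_num)]; linarith
    nlinarith [sq_nonneg (t - 0.694), sq_nonneg (t + 0.694), ht0.le]
  set x : ℝ := (k:ℝ)/N with hxdef
  have htmul : t * N = N ^ ((2:ℝ)/3) := by
    calc t*N = N^(-(1:ℝ)/3) * N^(1:ℝ) := by rw [Real.rpow_one, htdef]
      _ = N^(-(1:ℝ)/3 + 1) := (Real.rpow_add hN0 _ _).symm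
      _ = N^((2:ℝ)/3) := by norm_num
  have hkabs : |(k:ℝ)| ≤ N ^ ((2:ℝ)/3) := by exact_mod_cast hk
  have hut : |x| ≤ t := by
    rw [hxdef, abs_div, abs_of_pos hN0, div_le_iff₀ hN0]
    rw [← htmul] at hkabs; linarith
  have hb : b n k - (k:ℝ)^2/N = N*((1+x)*Real.log (1+x) + (1-x)*Real.log (1-x) - x^2)
      + (1/2)*(Real.log (1+x) + Real.log (1-x)) := by
    rw [hxdef]
    simp only [b, hNdef]
    field_simp
    ring
  calc |b n k - (k:ℝ)^2/(n:ℝ)| = |N*((1+x)*Real.log (1+x) + (1-x)*Real.log (1-x) - x^2)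
      + (1/2)*(Real.log (1+x) + Real.log (1-x))| := by rw [← hb, hNdef]
    _ ≤ t := core_bound N t x hN0 ht0 htc hNt hut
end
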